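/- Let a, b, c, d, p, q, r, s be integers satisfying a·p + b·q = 1 + a·b and c·r + d·s = 1 + c·d, and set v = a·d − b·c. Then (a·r − b·(c − s))·(c·p − d·(a − q)) ≡ 1 (mod v); that is, modulo v, the integers a·r − b·(c − s) and c·p − d·(a − q) are mutual modular inverses. -/
import Mathlib

theorem product_congruence_x4_y4
    (a b c d p q r s : ℤ)
    (hab : a * p + b * q = 1 + a * b)
    (hcd : c * r + d * s = 1 + c * d) :
    (a * r - b * (c - s)) * (c * p - d * (a - q)) ≡ 1 [ZMOD a * d - b * c] := by
  have h : (a * d - b * c) ∣ ((a * r - b * (c - s)) * (c * p - d * (a - q)) - 1) :=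
    ⟨q * r - a * r - b * s + b * c + (p - b) * (c - s), by
      linear_combination (c * r - d * (c - s)) * hab + hcd⟩
  exact (Int.modEq_iff_dvd.mpr (by simpa using h.neg_right))
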